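/- Let M be a real symmetric n×n matrix, λ ∈ ℝ with λ_1(M) > λ, and let v be a unit-norm eigenvector of M for the eigenvalue λ_1(M) with ‖v‖_∞ > 0. Suppose y ∈ ℝ^n is such that y yᵀ maximizes ⟨Y, M − λI⟩ over the set {Y ∈ ℝ^{n×n} : Y symmetric positive semidefinite, Y_{ii} ≤ 1 for all i}. Then ‖y‖_2 ≥ 1/‖v‖_∞. -/

import Mathlib

open Matrix

/-- The eigenvalues of a real symmetric matrix, listed in decreasing order
(`eigDesc hM ⟨0, _⟩` is the largest eigenvalue). -/
noncomputable def eigDesc {n : ℕ} {M : Matrix (Fin n) (Fin n) ℝ} (hM : M.IsHermitian) :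
    Fin n → ℝ :=
  fun i => -(((fun j => -hM.eigenvalues j) ∘ Tuple.sort (fun j => -hM.eigenvalues j)) i)

/-- Trace inner product `⟨X, Y⟩ = Σ_{i,j} X_{ij} Y_{ij}`. -/
noncomputable def mip {d : ℕ} (X Y : Matrix (Fin d) (Fin d) ℝ) : ℝ :=
  ∑ i, ∑ j, X i j * Y i j

lemma eigDesc_zero_ge {n : ℕ} (hn : 0 < n) {M : Matrix (Fin n) (Fin n) ℝ}
    (hM : M.IsHermitian) (j : Fin n) : hM.eigenvalues j ≤ eigDesc hM ⟨0, hn⟩ := by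
  set g : Fin n → ℝ := fun j => -hM.eigenvalues j with hg
  set σ := Tuple.sort g with hσ
  have hmono : Monotone (g ∘ σ) := Tuple.monotone_sort g
  have h0 : (⟨0, hn⟩ : Fin n) ≤ σ.symm j := by
    simp [Fin.le_def]
  have := hmono h0
  simp only [Function.comp_apply, Equiv.apply_symm_apply] at this
  have : g (σ ⟨0, hn⟩) ≤ -hM.eigenvalues j := this
  simp only [eigDesc, ← hg, ← hσ, Function.comp_apply]
  linarith

lemma mip_vecMulVec {n : ℕ} (M : Matrix (Fin n) (Fin n) ℝ) (lam : ℝ) (a b : Fin n → ℝ) :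
    mip (Matrix.vecMulVec a b) (M - lam • (1 : Matrix (Fin n) (Fin n) ℝ))
      = a ⬝ᵥ (M.mulVec b) - lam * (a ⬝ᵥ b) := by
  simp only [mip, vecMulVec_apply, Matrix.sub_apply, Matrix.smul_apply, one_apply, smul_eq_mul,
    dotProduct, mulVec, mul_sub, Finset.sum_sub_distrib, mul_ite, mul_one, mul_zero]
  congr 1
  · rw [Finset.sum_congr rfl]
    intro i _
    rw [Finset.mul_sum]
    exact Finset.sum_congr rfl fun j _ => by ring
  · rw [Finset.mul_sum]
    apply Finset.sum_congr rfl
    intro i _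
    rw [Finset.sum_ite_eq Finset.univ i (fun j => a i * b j * lam)]
    simp [mul_comm, mul_left_comm]

lemma mip_smul {n : ℕ} (c : ℝ) (X Z : Matrix (Fin n) (Fin n) ℝ) :
    mip (c • X) Z = c * mip X Z := by
  simp [mip, Finset.mul_sum, mul_assoc]

lemma posSemidef_smul_vecMulVec {n : ℕ} (c : ℝ) (hc : 0 ≤ c) (v : Fin n → ℝ) :
    (c • Matrix.vecMulVec v v).PosSemidef := by
  refine posSemidef_iff_dotProduct_mulVec.mpr ⟨?_, ?_⟩
  · ext i j
    simp [conjTranspose, vecMulVec_apply, mul_comm]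
  · intro x
    have hmv : (c • Matrix.vecMulVec v v).mulVec x = fun i => c * (v i * (v ⬝ᵥ x)) := by
      funext i
      simp only [mulVec, dotProduct, Matrix.smul_apply, vecMulVec_apply, smul_eq_mul,
        Finset.mul_sum]
      exact Finset.sum_congr rfl fun j _ => by ring
    rw [hmv]
    set s := v ⬝ᵥ x with hs
    have hss : (star x) ⬝ᵥ (fun i => c * (v i * s)) = c * (s * s) := by
      simp only [dotProduct, Pi.star_apply, star_trivial]
      calc ∑ i, x i * (c * (v i * s)) = c * s * ∑ i, x i * v i := by
            rw [Finset.mul_sum]; exact Finset.sum_congr rfl fun i _ => by ring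
        _ = c * (s * s) := by
            rw [show ∑ i, x i * v i = x ⬝ᵥ v from rfl, dotProduct_comm, ← hs]; ring
    rw [hss]
    exact mul_nonneg hc (mul_self_nonneg _)

theorem relaxed_oracle_norm_lower_bound
    {n : ℕ} (hn : 0 < n) (M : Matrix (Fin n) (Fin n) ℝ) (hM : M.IsHermitian)
    (lam : ℝ) (hlam : lam < eigDesc hM ⟨0, hn⟩)
    (v : Fin n → ℝ) (hv : v ⬝ᵥ v = 1)
    (hveig : M.mulVec v = eigDesc hM ⟨0, hn⟩ • v)
    (hvinf : 0 < ‖v‖)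
    (y : Fin n → ℝ)
    (hyfeas : ∀ i, Matrix.vecMulVec y y i i ≤ 1)
    (hymax : ∀ Y : Matrix (Fin n) (Fin n) ℝ, Y.PosSemidef → (∀ i, Y i i ≤ 1) →
      mip Y (M - lam • (1 : Matrix (Fin n) (Fin n) ℝ)) ≤
        mip (Matrix.vecMulVec y y) (M - lam • (1 : Matrix (Fin n) (Fin n) ℝ))) :
    1 / ‖v‖ ≤ Real.sqrt (y ⬝ᵥ y) := by
  set L := eigDesc hM ⟨0, hn⟩ with hL
  -- Rayleigh bound: yᵀ M y ≤ L (y ⬝ y)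
  have hN : (L • (1 : Matrix (Fin n) (Fin n) ℝ) - M).PosSemidef := by
    have hU := (Matrix.mem_unitaryGroup_iff).mp (hM.eigenvectorUnitary).2
    have hrw : L • (1 : Matrix (Fin n) (Fin n) ℝ) - M
        = (hM.eigenvectorUnitary : Matrix (Fin n) (Fin n) ℝ)
          * diagonal (fun i => L - hM.eigenvalues i)
          * (star (hM.eigenvectorUnitary : Matrix (Fin n) (Fin n) ℝ)) := by
      have hdiag : diagonal (fun i => L - hM.eigenvalues i)
          = L • (1 : Matrix (Fin n) (Fin n) ℝ)
            - diagonal (RCLike.ofReal ∘ hM.eigenvalues) := by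
        ext i j
        by_cases h : i = j <;> simp [diagonal, h, Function.comp]
      rw [hdiag, mul_sub, sub_mul, Matrix.mul_smul, mul_one, Matrix.smul_mul, hU]
      congr 1
      exact hM.spectral_theorem
    rw [hrw]
    refine (posSemidef_diagonal_iff.mpr ?_).mul_mul_conjTranspose_same _
    intro i
    have := eigDesc_zero_ge hn hM i
    simpa [hL] using sub_nonneg.mpr this
  have hray : y ⬝ᵥ (M.mulVec y) ≤ L * (y ⬝ᵥ y) := by
    have := hN.dotProduct_mulVec_nonneg y
    simp only [star_trivial, sub_mulVec, smul_mulVec, one_mulVec,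
      dotProduct_sub, dotProduct_smul, smul_eq_mul] at this
    linarith
  have hLlam : 0 < L - lam := sub_pos.mpr hlam
  set c : ℝ := 1 / ‖v‖ ^ 2 with hc
  have hcpos : 0 < c := by positivity
  -- feasibility of c • v vᵀ
  have hdiag : ∀ i, (c • Matrix.vecMulVec v v) i i ≤ 1 := by
    intro i
    have h1 : |v i| ≤ ‖v‖ := by
      simpa [Real.norm_eq_abs] using norm_le_pi_norm v i
    have h2 : v i * v i ≤ ‖v‖ ^ 2 := by
      nlinarith [h1, abs_nonneg (v i), sq_abs (v i)]
    simp only [Matrix.smul_apply, vecMulVec_apply, smul_eq_mul, hc]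
    rw [div_mul_eq_mul_div, one_mul, div_le_one (by positivity)]
    exact h2
  have hkey := hymax (c • Matrix.vecMulVec v v) (posSemidef_smul_vecMulVec c hcpos.le v) hdiag
  rw [mip_smul, mip_vecMulVec, mip_vecMulVec, hveig, hv] at hkey
  simp only [dotProduct_smul, hv, smul_eq_mul, mul_one] at hkey
  -- hkey : c * (L - lam) ≤ y ⬝ᵥ M *ᵥ y - lam * (y ⬝ᵥ y)
  have hfin : c ≤ y ⬝ᵥ y := by
    have h3 : c * (L - lam) ≤ (L - lam) * (y ⬝ᵥ y) := by nlinarith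
    have := (mul_le_mul_iff_right₀ hLlam).mp (by linarith [h3] : (L - lam) * c ≤ (L - lam) * (y ⬝ᵥ y))
    exact this
  have hsqrt : Real.sqrt c = 1 / ‖v‖ := by
    rw [hc, one_div, one_div, Real.sqrt_inv, Real.sqrt_sq (le_of_lt hvinf)]
  calc 1 / ‖v‖ = Real.sqrt c := hsqrt.symm
    _ ≤ Real.sqrt (y ⬝ᵥ y) := Real.sqrt_le_sqrt hfin
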